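/- Let π : Ã* → G be an m-epi, let A be an involutive Ã-automaton, and suppose there is a path from a state p to a state q in A labelled by a word w with wπ = 1. Let B be the automaton obtained from A by identifying the states p and q. Then L(A) ⊆ L(B) and (L(B))π = (L(A))π. -/
import Mathlib


/-!  Common framework: words over an involutive alphabet Ã = A ∪ A⁻¹ (modelled as
`α × Bool`), free reduction, matched epimorphisms, Stallings sections and
Ã-automata, following Silva–Soler-Escrivà–Ventura. -/

/-- A word over the involutive alphabet Ã = A ∪ A⁻¹: the letter `(a, tt)` denotes
`a` and `(a, ff)` denotes `a⁻¹` (the `FreeGroup` convention). -/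
abbrev Word (α : Type) : Type := List (α × Bool)

namespace Stallings

instance {β : Type} : HasSubset (Language β) := ⟨fun L M => ∀ w ∈ L, w ∈ M⟩
instance {β : Type} : Union (Language β) := ⟨fun L M => {w | w ∈ L ∨ w ∈ M}⟩
instance {β : Type} : Inter (Language β) := ⟨fun L M => {w | w ∈ L ∧ w ∈ M}⟩
instance {β : Type} : EmptyCollection (Language β) := ⟨(∅ : Set (List β))⟩

variable {α : Type} {G : Type} [Group G]

/-- The formal inverse of a letter of Ã. -/
def letterInv (x : α × Bool) : α × Bool := (x.1, !x.2)

/-- The formal inverse `w⁻¹` of a word over Ã. -/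
def wordInv (w : Word α) : Word α := (w.map letterInv).reverse

/-- The free reduction `w̄` of a word over Ã (iterated deletion of factors `a a⁻¹`). -/
noncomputable def redW (w : Word α) : Word α :=
  letI := Classical.decEq α
  FreeGroup.reduce w

/-- The reduction `L̄` of a language over Ã. -/
noncomputable def red (L : Language (α × Bool)) : Language (α × Bool) :=
  redW '' L

/-- The set `R_A` of reduced words over Ã. -/
noncomputable def Reduced : Language (α × Bool) := {w | redW w = w}

/-- Evaluation of a monoid homomorphism `π : Ã* → G` at a word. -/
def ev (π : FreeMonoid (α × Bool) →* G) (w : Word α) : G :=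
  π (FreeMonoid.ofList w)

/-- The image of a language under (evaluation of) `π`. -/
def evImg (π : FreeMonoid (α × Bool) →* G) (L : Language (α × Bool)) : Set G :=
  {g | ∃ w ∈ L, ev π w = g}

/-- A matched epimorphism (m-epi) `π : Ã* → G`: a surjective monoid homomorphism
sending formal inverses to inverses. -/
structure IsMEpi (π : FreeMonoid (α × Bool) →* G) : Prop where
  surjective : Function.Surjective π
  matched : ∀ (a : α) (b : Bool),
    π (FreeMonoid.of (a, !b)) = (π (FreeMonoid.of (a, b)))⁻¹

/-- `S_X = Xπ⁻¹ ∩ S`, for `X ⊆ G`. -/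
def sub (S : Language (α × Bool)) (π : FreeMonoid (α × Bool) →* G) (X : Set G) :
    Language (α × Bool) :=
  {w ∈ S | ev π w ∈ X}

/-- A Stallings section for an m-epi `π : Ã* → G`: a regular section `S ⊆ R_A`
such that each `S_g` is regular (S1), and `S_{gh} ⊆ (S_g S_h)‾` (S2). -/
structure IsStallingsSection (π : FreeMonoid (α × Bool) →* G)
    (S : Language (α × Bool)) : Prop where
  regular : S.IsRegular
  reduced : S ⊆ Reduced
  inv_mem : ∀ w ∈ S, wordInv w ∈ S
  exists_rep : ∀ g : G, ∃ w ∈ S, ev π w = g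
  s1 : ∀ g : G, (sub S π {g}).IsRegular
  s2 : ∀ g h : G, sub S π {g * h} ⊆ red (sub S π {g} * sub S π {h})

/-- A group has a Stallings section if some m-epi onto it (from the free monoid on
an involutive finite alphabet) admits a Stallings section. -/
def HasStallingsSection (G : Type) [Group G] : Prop :=
  ∃ (α : Type) (π : FreeMonoid (α × Bool) →* G) (S : Language (α × Bool)),
    Finite α ∧ IsMEpi π ∧ IsStallingsSection π S

/-- `Pref L`: the set of prefixes of words of `L`. -/
def Pref (L : Language (α × Bool)) : Language (α × Bool) :=
  {u | ∃ v, u ++ v ∈ L}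

/-- An extendable Stallings section: every `u ∈ S` admits a reduced word `v` with
`u vⁿ ∈ S` for all `n` and `u ∈ Pref (S_{(u vⁿ u⁻¹)π})` for almost all `n`. -/
def Extendable (π : FreeMonoid (α × Bool) →* G) (S : Language (α × Bool)) : Prop :=
  ∀ u ∈ S, ∃ v : Word α, v ∈ Reduced ∧
    (∀ n : ℕ, u ++ (List.replicate n v).flatten ∈ S) ∧
    ∃ N : ℕ, ∀ n ≥ N, u ∈ Pref (sub S π {ev π u * (ev π v) ^ n * (ev π u)⁻¹})

/-- An Ã-automaton with state type `Q`, initial state `start`, terminal states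
`accept` and edge set `edges`. -/
structure Automaton (β : Type) (Q : Type) where
  start : Q
  accept : Set Q
  edges : Set (Q × β × Q)

namespace Automaton

variable {β Q : Type}

/-- `M.Path p w q`: there is a path from `p` to `q` labelled `w`. -/
inductive Path (M : Automaton β Q) : Q → List β → Q → Prop
  | nil (q : Q) : Path M q [] q
  | cons {p q r : Q} {a : β} {w : List β} :
      (p, a, q) ∈ M.edges → Path M q w r → Path M p (a :: w) r

/-- The language recognized by an automaton. -/
def lang (M : Automaton β Q) : Language β :=
  {w | ∃ t ∈ M.accept, M.Path M.start w t}

/-- A trim automaton: every state lies on some successful path. -/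
def Trim (M : Automaton β Q) : Prop :=
  ∀ q : Q, ∃ (u v : List β) (t : Q), t ∈ M.accept ∧ M.Path M.start u q ∧ M.Path q v t

/-- An involutive Ã-automaton. -/
def Involutive {α : Type} (M : Automaton (α × Bool) Q) : Prop :=
  ∀ p a q, (p, a, q) ∈ M.edges → (q, letterInv a, p) ∈ M.edges

/-- A deterministic automaton. -/
def Deterministic (M : Automaton β Q) : Prop :=
  ∀ p a q q', (p, a, q) ∈ M.edges → (p, a, q') ∈ M.edges → q = q'

/-- An inverse automaton: involutive, deterministic, trim, with a single
terminal state. -/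
def IsInverse {α : Type} (M : Automaton (α × Bool) Q) : Prop :=
  M.Involutive ∧ M.Deterministic ∧ M.Trim ∧ ∃ t : Q, M.accept = {t}

/-- The automaton obtained by identifying the states `p` and `q` (the quotient is
realized on the same state type, redirecting `q` to `p`). -/
def merge [DecidableEq Q] (M : Automaton β Q) (p q : Q) : Automaton β Q :=
  let f : Q → Q := fun x => if x = q then p else x
  { start := f M.start
    accept := f '' M.accept
    edges := {e | ∃ e' ∈ M.edges, e = (f e'.1, e'.2.1, f e'.2.2)} }

end Automaton

end Stallings

namespace Stallings

variable {α G Q : Type} [Group G]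

lemma ev_nil (π : FreeMonoid (α × Bool) →* G) : ev π ([] : Word α) = 1 :=
  map_one π

lemma ev_append (π : FreeMonoid (α × Bool) →* G) (u v : Word α) :
    ev π (u ++ v) = ev π u * ev π v := by
  simp only [ev]
  rw [show FreeMonoid.ofList (u ++ v) = FreeMonoid.ofList u * FreeMonoid.ofList v from rfl,
    map_mul]

lemma ev_cons (π : FreeMonoid (α × Bool) →* G) (a : α × Bool) (u : Word α) :
    ev π (a :: u) = π (FreeMonoid.of a) * ev π u := by
  rw [show (a :: u : Word α) = [a] ++ u from rfl, ev_append]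
  rfl

lemma ev_letterInv (π : FreeMonoid (α × Bool) →* G) (hπ : IsMEpi π) (a : α × Bool) :
    ev π [letterInv a] = (ev π [a])⁻¹ := by
  obtain ⟨x, b⟩ := a
  have h := hπ.matched x b
  simpa [ev, letterInv, FreeMonoid.ofList, FreeMonoid.of] using h

lemma ev_wordInv (π : FreeMonoid (α × Bool) →* G) (hπ : IsMEpi π) (u : Word α) :
    ev π (wordInv u) = (ev π u)⁻¹ := by
  induction u with
  | nil => simp [wordInv, ev_nil]
  | cons a u ih =>
    have : wordInv (a :: u) = wordInv u ++ [letterInv a] := by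
      simp [wordInv]
    have h1 : ev π [a] = π (FreeMonoid.of a) := by rw [ev_cons, ev_nil, mul_one]
    rw [this, ev_append, ih, ev_letterInv π hπ, h1, ev_cons]
    group

namespace Automaton

lemma Path.append {β : Type} {M : Automaton β Q} {a b c : Q} {u v : List β}
    (h1 : M.Path a u b) (h2 : M.Path b v c) : M.Path a (u ++ v) c := by
  induction h1 with
  | nil => simpa using h2
  | cons he _ ih => exact Path.cons he (ih h2)

lemma Path.wordInv {M : Automaton (α × Bool) Q} (hM : M.Involutive)
    {a b : Q} {u : Word α} (h : M.Path a u b) : M.Path b (Stallings.wordInv u) a := by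
  induction h with
  | nil => exact Path.nil _
  | @cons p' q' r' x u' he _ ih =>
    have : Stallings.wordInv (x :: u') = Stallings.wordInv u' ++ [letterInv x] := by
      simp [Stallings.wordInv]
    rw [this]
    exact ih.append (Path.cons (hM _ _ _ he) (Path.nil _))

lemma merge_start {β : Type} [DecidableEq Q] (M : Automaton β Q) (p q : Q) :
    (M.merge p q).start = if M.start = q then p else M.start := rfl

lemma merge_accept {β : Type} [DecidableEq Q] (M : Automaton β Q) (p q : Q) :
    (M.merge p q).accept = (fun x => if x = q then p else x) '' M.accept := rfl

lemma merge_edges {β : Type} [DecidableEq Q] (M : Automaton β Q) (p q : Q) :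
    (M.merge p q).edges = {e | ∃ e' ∈ M.edges,
      e = ((fun x => if x = q then p else x) e'.1, e'.2.1,
        (fun x => if x = q then p else x) e'.2.2)} := rfl

lemma path_merge {β : Type} [DecidableEq Q] {M : Automaton β Q} {p q : Q}
    {s t : Q} {u : List β} (h : M.Path s u t) :
    (M.merge p q).Path (if s = q then p else s) u (if t = q then p else t) := by
  induction h with
  | nil => exact Automaton.Path.nil _
  | @cons a b c x u' he _ ih =>
    refine Automaton.Path.cons ?_ ih
    rw [merge_edges]
    exact ⟨(a, x, b), he, rfl⟩

lemma connect [DecidableEq Q] {π : FreeMonoid (α × Bool) →* G} (hπ : IsMEpi π)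
    {M : Automaton (α × Bool) Q} (hM : M.Involutive) {p q : Q} {w : Word α}
    (hw : M.Path p w q) (hw1 : ev π w = 1) {x y : Q}
    (h : (if x = q then p else x) = (if y = q then p else y)) :
    ∃ c, M.Path x c y ∧ ev π c = 1 := by
  by_cases hxy : x = y
  · exact ⟨[], hxy ▸ Automaton.Path.nil x, ev_nil π⟩
  by_cases hx : x = q <;> by_cases hy : y = q <;> simp [hx, hy] at h
  · exact absurd (hx.trans hy.symm) hxy
  · subst hx h
    exact ⟨wordInv w, hw.wordInv hM, by rw [ev_wordInv π hπ, hw1]; group⟩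
  · subst hy h
    exact ⟨w, hw, hw1⟩
  · exact absurd h hxy

lemma path_lift [DecidableEq Q] {π : FreeMonoid (α × Bool) →* G} (hπ : IsMEpi π)
    {M : Automaton (α × Bool) Q} (hM : M.Involutive) {p q : Q} {w : Word α}
    (hw : M.Path p w q) (hw1 : ev π w = 1) {x y : Q} {u : Word α}
    (h : (M.merge p q).Path x u y) :
    ∀ x', (if x' = q then p else x') = x →
      ∃ y' u', (if y' = q then p else y') = y ∧ M.Path x' u' y' ∧ ev π u' = ev π u := by
  induction h with
  | nil z => exact fun x' hx' => ⟨x', [], hx', Automaton.Path.nil _, rfl⟩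
  | @cons a b c x u' he _ ih =>
    intro x' hx'
    rw [merge_edges] at he
    obtain ⟨⟨s, x₀, t⟩, he', heq⟩ := he
    simp only [Prod.mk.injEq] at heq
    obtain ⟨h1, h2, h3⟩ := heq
    obtain ⟨c₀, hc₀, hc₀1⟩ := connect hπ hM hw hw1 (x := x') (y := s) (by rw [hx', h1])
    subst h2
    obtain ⟨y', u₁, hy', hp₁, he₁⟩ := ih t h3.symm
    refine ⟨y', c₀ ++ x :: u₁, hy', hc₀.append (Automaton.Path.cons he' hp₁), ?_⟩
    rw [ev_append, hc₀1, one_mul, ev_cons, he₁, ev_cons]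

end Automaton

end Stallings

open Stallings in
/-- If `M` is an involutive Ã-automaton with a path from `p` to `q`
labelled by a word `w` with `wπ = 1`, then the automaton `B` obtained by
identifying `p` and `q` satisfies `L(M) ⊆ L(B)` and `(L(B))π = (L(M))π`. -/
theorem lang_merge_of_kernel_path {α G Q : Type} [Finite α] [Group G]
    [DecidableEq Q] (π : FreeMonoid (α × Bool) →* G) (hπ : IsMEpi π)
    (M : Automaton (α × Bool) Q) (hM : M.Involutive)
    (p q : Q) (w : Word α) (hw : M.Path p w q) (hw1 : ev π w = 1) :
    M.lang ⊆ (M.merge p q).lang ∧ evImg π (M.merge p q).lang = evImg π M.lang := by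
  have hsub : M.lang ⊆ (M.merge p q).lang := by
    rintro u ⟨t, ht, hpath⟩
    exact ⟨if t = q then p else t, ⟨t, ht, rfl⟩, Automaton.path_merge hpath⟩
  refine ⟨hsub, Set.eq_of_subset_of_subset ?_ ?_⟩
  · rintro g ⟨u, ⟨t, ht, hpath⟩, rfl⟩
    rw [Automaton.merge_accept] at ht
    obtain ⟨t₀, ht₀, rfl⟩ := ht
    obtain ⟨y', u', hy', hp', he'⟩ :=
      Automaton.path_lift hπ hM hw hw1 hpath M.start rfl
    obtain ⟨c, hc, hc1⟩ := Automaton.connect hπ hM hw hw1 (x := y') (y := t₀) hy'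
    exact ⟨u' ++ c, ⟨t₀, ht₀, hp'.append hc⟩, by rw [ev_append, hc1, mul_one, he']⟩
  · rintro g ⟨u, hu, rfl⟩
    exact ⟨u, hsub u hu, rfl⟩
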